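/- For every n ≥ 4, the number of occurrences of the pattern [112-21) in C_n equals 2^{n-2} - 2; that is, the number of positions j ≥ 4 with C_n(j)C_n(j+1) = 21, given that C_n begins with 112, counted as occurrences of 21 that do not overlap the initial block 112, equals 2^{n-2} - 2. -/
import Mathlib


/-- The pair `(C_n, D_n)` of sigma-words, with `C_0 = D_0 = []`,
`C_{k+1} = C_k · 1 · D_k`, `D_{k+1} = C_k · 2 · D_k`
(so `C_1 = [1]`, `D_1 = [2]`). -/
def sigmaCD : ℕ → List ℕ × List ℕ
  | 0 => ([], [])
  | k + 1 => ((sigmaCD k).1 ++ 1 :: (sigmaCD k).2, (sigmaCD k).1 ++ 2 :: (sigmaCD k).2)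

/-- The sigma-word `C_n`. -/
def sigmaC (n : ℕ) : List ℕ := (sigmaCD n).1

/-- The sigma-word `D_n`. -/
def sigmaD (n : ℕ) : List ℕ := (sigmaCD n).2

/-- Number of occurrences of `p` as a (not necessarily contiguous) subsequence of `w`,
counted with multiplicity of position sets. -/
def subseqCount (p w : List ℕ) : ℕ := (w.sublistsLen p.length).count p

/-- Number of occurrences of `p` as a factor (contiguous subword) of `w`,
i.e. the number of starting positions at which `p` occurs in `w`. -/
def factorCount (p w : List ℕ) : ℕ :=
  (List.range w.length).countP fun i => decide ((w.drop i).take p.length = p)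

/-- Number of occurrences of the generalized pattern `[112-21)` in `w`
(positions 1-indexed in the paper, 0-indexed here): the word must begin with the
factor `112`, and one counts positions `j ≥ 3` with `w(j)w(j+1) = 21`. -/
def countL112_21 (w : List ℕ) : ℕ :=
  if w.take 3 = [1, 1, 2] then
    (List.range w.length).countP fun j =>
      decide (3 ≤ j ∧ w.getD j 0 = 2 ∧ w.getD (j + 1) 0 = 1 ∧ j + 1 < w.length)
  else 0

/-- Number of occurrences of the factor `21` in a word. -/
def cnt : List ℕ → ℕ
  | [] => 0
  | [_] => 0
  | a :: b :: t => (if a = 2 ∧ b = 1 then 1 else 0) + cnt (b :: t)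

lemma cnt_cons_cons (a b : ℕ) (t : List ℕ) :
    cnt (a :: b :: t) = (if a = 2 ∧ b = 1 then 1 else 0) + cnt (b :: t) := rfl

lemma cnt_singleton (x : ℕ) : cnt [x] = 0 := rfl

lemma cnt_append : ∀ (u : List ℕ) (x : ℕ) (v : List ℕ),
    cnt (u ++ x :: v) = cnt (u ++ [x]) + cnt (x :: v)
  | [], x, v => by simp [cnt_singleton]
  | [a], x, v => by
    simp only [List.cons_append, List.nil_append, cnt_cons_cons, cnt_singleton]; omega
  | a :: b :: u, x, v => by
    have := cnt_append (b :: u) x v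
    simp only [List.cons_append, cnt_cons_cons] at *
    omega

lemma g_eq_cnt : ∀ r : List ℕ,
    (List.range r.length).countP
      (fun i => decide (r.getD i 0 = 2 ∧ r.getD (i+1) 0 = 1 ∧ i+1 < r.length)) = cnt r
  | [] => by simp [cnt]
  | a :: t => by
    have ih := g_eq_cnt t
    rw [List.length_cons, List.range_succ_eq_map, List.countP_cons, List.countP_map]
    have h2 : (List.countP
        ((fun i => decide ((a::t).getD i 0 = 2 ∧ (a::t).getD (i+1) 0 = 1 ∧ i+1 < t.length + 1)) ∘ Nat.succ)
        (List.range t.length)) = cnt t := by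
      rw [← ih]
      apply List.countP_congr
      intro i hi
      simp only [Function.comp_apply, Nat.succ_eq_add_one, List.getD_cons_succ,
        decide_eq_true_eq]
      constructor <;> rintro ⟨h1, h2, h3⟩ <;> exact ⟨h1, h2, by omega⟩
    rw [h2]
    cases t with
    | nil => simp [cnt]
    | cons b t' =>
      rw [cnt_cons_cons]
      simp only [List.getD_cons_zero, List.getD_cons_succ, List.length_cons,
        decide_eq_true_eq]
      by_cases h : a = 2 ∧ b = 1
      · simp [h]; omega
      · rw [if_neg h, if_neg (fun hc => h ⟨hc.1, hc.2.1⟩)]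
        omega

lemma sigmaC_succ (n : ℕ) : sigmaC (n+1) = sigmaC n ++ 1 :: sigmaD n := rfl
lemma sigmaD_succ (n : ℕ) : sigmaD (n+1) = sigmaC n ++ 2 :: sigmaD n := rfl

lemma sigma_struct : ∀ n : ℕ,
    (∃ s, sigmaC (n+2) = 1 :: s) ∧ (∃ t, sigmaD (n+2) = 1 :: t) ∧
    (∃ u, sigmaC (n+2) = u ++ [2]) ∧ (∃ v, sigmaD (n+2) = v ++ [2]) ∧
    cnt (sigmaC (n+2)) = 2 ^ n - 1 ∧ cnt (sigmaD (n+2)) = 2 ^ n - 1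
  | 0 => by
    refine ⟨⟨[1,2], rfl⟩, ⟨[2,2], rfl⟩, ⟨[1,1], rfl⟩, ⟨[1,2], rfl⟩, rfl, rfl⟩
  | n + 1 => by
    obtain ⟨⟨s, hs⟩, ⟨t, ht⟩, ⟨u, hu⟩, ⟨v, hv⟩, hc, hd⟩ := sigma_struct n
    have hC := sigmaC_succ (n+2)
    have hD := sigmaD_succ (n+2)
    have h2n : 1 ≤ 2 ^ n := Nat.one_le_two_pow
    have hcC : cnt (sigmaC (n+3)) = 2 ^ (n+1) - 1 := by
      rw [hC, cnt_append, hu]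
      rw [show (u ++ [2]) ++ [1] = u ++ 2 :: [1] by simp, cnt_append u 2 [1]]
      rw [← hu, hc, ht, show cnt [2,1] = 1 from rfl,
        show cnt (1 :: 1 :: t) = cnt (1 :: t) from by rw [cnt_cons_cons]; simp,
        ← ht, hd]
      rw [pow_succ]; omega
    have hcD : cnt (sigmaD (n+3)) = 2 ^ (n+1) - 1 := by
      rw [hD, cnt_append, hu]
      rw [show (u ++ [2]) ++ [2] = u ++ 2 :: [2] by simp, cnt_append u 2 [2]]
      rw [← hu, hc, ht, show cnt [2,2] = 0 from rfl,
        show cnt (2 :: 1 :: t) = 1 + cnt (1 :: t) from by rw [cnt_cons_cons]; simp,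
        ← ht, hd]
      rw [pow_succ]; omega
    exact ⟨⟨s ++ 1 :: sigmaD (n+2), by rw [hC, hs]; rfl⟩,
      ⟨s ++ 2 :: sigmaD (n+2), by rw [hD, hs]; rfl⟩,
      ⟨sigmaC (n+2) ++ 1 :: v, by rw [hC, hv]; simp⟩,
      ⟨sigmaC (n+2) ++ 2 :: v, by rw [hD, hv]; simp⟩,
      hcC, hcD⟩

lemma sigmaC_pre : ∀ n : ℕ, ∃ s, sigmaC (n+3) = 1 :: 1 :: 2 :: 1 :: s
  | 0 => ⟨[1,2,2], rfl⟩
  | n + 1 => by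
    obtain ⟨s, hs⟩ := sigmaC_pre n
    exact ⟨s ++ 1 :: sigmaD (n+3), by rw [sigmaC_succ, hs]; rfl⟩

lemma countP_shift (r : List ℕ) :
    (List.range (1 :: 1 :: 2 :: r : List ℕ).length).countP
      (fun j => decide (3 ≤ j ∧ (1 :: 1 :: 2 :: r : List ℕ).getD j 0 = 2 ∧
        (1 :: 1 :: 2 :: r : List ℕ).getD (j+1) 0 = 1 ∧ j+1 < (1 :: 1 :: 2 :: r : List ℕ).length))
      = cnt r := by
  set w : List ℕ := 1 :: 1 :: 2 :: r with hw
  have hlen : w.length = 3 + r.length := by simp [hw]; omega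
  rw [hlen, List.range_add, List.countP_append, List.countP_map]
  have h1 : (List.range 3).countP
      (fun j => decide (3 ≤ j ∧ w.getD j 0 = 2 ∧ w.getD (j+1) 0 = 1 ∧ j+1 < 3 + r.length)) = 0 := by
    apply List.countP_eq_zero.2
    intro j hj
    simp only [List.mem_range] at hj
    simp only [decide_eq_true_eq]
    omega
  rw [h1, ← g_eq_cnt r, Nat.zero_add]
  apply List.countP_congr
  intro i hi
  simp only [Function.comp_apply, decide_eq_true_eq]
  have e1 : w.getD (3 + i) 0 = r.getD i 0 := by
    rw [show 3 + i = i + 1 + 1 + 1 by omega, hw]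
    simp [List.getD_cons_succ]
  have e2 : w.getD (3 + i + 1) 0 = r.getD (i + 1) 0 := by
    rw [show 3 + i + 1 = (i + 1) + 1 + 1 + 1 by omega, hw]
    simp [List.getD_cons_succ]
  rw [e1, e2]
  constructor
  · rintro ⟨-, h2, h3, h4⟩; exact ⟨h2, h3, by omega⟩
  · rintro ⟨h2, h3, h4⟩; exact ⟨by omega, h2, h3, by omega⟩

theorem pattern_bracket_112_21 (n : ℕ) (hn : 4 ≤ n) :
    countL112_21 (sigmaC n) = 2 ^ (n - 2) - 2 := by
  obtain ⟨m, rfl⟩ := Nat.exists_eq_add_of_le hn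
  obtain ⟨s, hs⟩ := sigmaC_pre (m + 1)
  rw [show 4 + m = m + 1 + 3 by omega] at *
  have hcnt : cnt (sigmaC (m + 1 + 3)) = 2 ^ (m + 2) - 1 := by
    rw [show m + 1 + 3 = (m + 2) + 2 by omega]
    exact (sigma_struct (m + 2)).2.2.2.2.1
  have hstep : cnt (sigmaC (m + 1 + 3)) = cnt (1 :: s) + 1 := by
    rw [hs, cnt_cons_cons, cnt_cons_cons, cnt_cons_cons]
    norm_num
    omega
  have h2 : 2 ≤ 2 ^ (m + 2) := by
    calc 2 = 2 ^ 1 := rfl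
    _ ≤ 2 ^ (m + 2) := Nat.pow_le_pow_right (by norm_num) (by omega)
  have hgoal : cnt (1 :: s) = 2 ^ (m + 2) - 2 := by omega
  unfold countL112_21
  rw [hs]
  rw [if_pos (by rfl : List.take 3 (1 :: 1 :: 2 :: 1 :: s) = [1, 1, 2])]
  have := countP_shift (1 :: s)
  rw [show (1 : ℕ) :: 1 :: 2 :: 1 :: s = 1 :: 1 :: 2 :: (1 :: s) from rfl]
  rw [this, hgoal, show m + 1 + 3 - 2 = m + 2 by omega]
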